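/- arXiv:0902.3592 — 2 statements merged into one kernel-verified Lean document; each statement's English description precedes it below -/
import Mathlib

section
/- Let D be an integral domain such that the v-operation distributes over finite intersections of nonzero finitely generated fractional ideals, i.e., (F₁ ∩ F₂)^v = F₁^v ∩ F₂^v for all nonzero finitely generated fractional ideals F₁, F₂. Then for all nonzero finitely generated fractional ideals F, G of D one has ((F :_D G))^v = (F^v :_D G^v), where (A :_D B) := (A : B) ∩ D. -/
open FractionalIdeal

variable {D K : Type*} [CommRing D] [IsDomain D] [Field K] [Algebra D K] [IsFractionRing D K]

/-- The `v`-operation: `A ↦ (A⁻¹)⁻¹`, where `A⁻¹ = (D : A) = 1 / A`. -/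
noncomputable def vop (A : FractionalIdeal (nonZeroDivisors D) K) :
    FractionalIdeal (nonZeroDivisors D) K := 1 / (1 / A)

/-- `A` is `v`-invertible if `(A·A⁻¹)^v = D`. -/
noncomputable def IsVInvertible (A : FractionalIdeal (nonZeroDivisors D) K) : Prop :=
  vop (A * (1 / A)) = 1

namespace VAux

local notation "FI" => FractionalIdeal (nonZeroDivisors D) K

lemma mem_inf_iff {A B : FI} {x : K} : x ∈ A ⊓ B ↔ x ∈ A ∧ x ∈ B := by
  rw [← FractionalIdeal.mem_coe, FractionalIdeal.coe_inf, Submodule.mem_inf,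
    FractionalIdeal.mem_coe, FractionalIdeal.mem_coe]

lemma one_div_ne_zero {A : FI} (hA : A ≠ 0) : (1 : FI) / A ≠ 0 := by
  obtain ⟨a, haS, ha⟩ := A.isFractional
  have hmem : algebraMap D K a ∈ (1 : FI) / A := by
    rw [mem_div_iff_of_ne_zero hA]
    intro y hy
    obtain ⟨c, hc⟩ := ha y hy
    exact (mem_one_iff _).mpr ⟨c, by rw [hc, Algebra.smul_def]⟩
  intro h
  rw [h] at hmem
  exact IsFractionRing.to_map_ne_zero_of_mem_nonZeroDivisors haS
    ((FractionalIdeal.mem_zero_iff _).mp hmem)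

lemma one_div_anti {A B : FI} (hA : A ≠ 0) (h : A ≤ B) : (1 : FI) / B ≤ 1 / A := by
  have hB : B ≠ 0 := fun hB0 => hA (le_antisymm (hB0 ▸ h) (zero_le _))
  rw [le_div_iff_mul_le hA]
  exact mul_le.mpr fun i hi j hj => (mem_div_iff_of_ne_zero hB).mp hi j (h hj)

lemma le_vop {A : FI} (hA : A ≠ 0) : A ≤ vop A := by
  rw [vop, le_div_iff_mul_le (one_div_ne_zero hA)]
  exact mul_one_div_le_one

lemma vop_ne_zero {A : FI} (hA : A ≠ 0) : vop A ≠ 0 :=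
  fun h => hA (le_antisymm (h ▸ le_vop hA) (zero_le _))

lemma vop_zero : vop (0 : FI) = 0 := by simp [vop]

lemma vop_one : vop (1 : FI) = 1 := by rw [vop, FractionalIdeal.div_one, FractionalIdeal.div_one]

lemma vop_mono {A B : FI} (h : A ≤ B) : vop A ≤ vop B := by
  by_cases hA : A = 0
  · rw [hA, vop_zero]; exact zero_le _
  · have hB : B ≠ 0 := fun hB0 => hA (le_antisymm (hB0 ▸ h) (zero_le _))
    exact one_div_anti (one_div_ne_zero hB) (one_div_anti hA h)

lemma one_div_one_div_one_div {A : FI} (hA : A ≠ 0) : (1 : FI) / (1 / (1 / A)) = 1 / A :=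
  le_antisymm (one_div_anti hA (le_vop hA)) (le_vop (one_div_ne_zero hA))

lemma vop_vop {A : FI} (hA : A ≠ 0) : vop (vop A) = vop A := by
  rw [vop, vop, one_div_one_div_one_div hA]

lemma one_div_vop {A : FI} (hA : A ≠ 0) : (1 : FI) / vop A = 1 / A :=
  one_div_one_div_one_div hA

lemma mul_le_mul_left'' {A B : FI} (C : FI) (h : A ≤ B) : C * A ≤ C * B :=
  mul_le.mpr fun i hi j hj => mul_mem_mul hi (h hj)

lemma one_div_spanSingleton_mul {z : K} (hz : z ≠ 0) {A : FI} (hA : A ≠ 0) :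
    (1 : FI) / (spanSingleton (nonZeroDivisors D) z * A)
      = spanSingleton (nonZeroDivisors D) z⁻¹ * (1 / A) := by
  have hsz : spanSingleton (nonZeroDivisors D) z ≠ 0 := spanSingleton_ne_zero_iff.mpr hz
  have hzA : spanSingleton (nonZeroDivisors D) z * A ≠ 0 := by
    obtain ⟨x, hx, hx0⟩ : ∃ x ∈ A, x ≠ 0 := by
      by_contra h; push_neg at h; exact hA (eq_zero_iff.mpr h)
    intro h0
    have : z * x ∈ (0 : FI) := h0 ▸ mul_mem_mul (mem_spanSingleton_self _ z) hx
    exact (mul_ne_zero hz hx0) ((FractionalIdeal.mem_zero_iff _).mp this)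
  have hinv : spanSingleton (nonZeroDivisors D) z⁻¹ * spanSingleton (nonZeroDivisors D) z
      = 1 := by
    rw [spanSingleton_mul_spanSingleton, inv_mul_cancel₀ hz, spanSingleton_one]
  apply le_antisymm
  · have h1 : spanSingleton (nonZeroDivisors D) z *
        ((1 : FI) / (spanSingleton (nonZeroDivisors D) z * A)) ≤ 1 / A := by
      rw [le_div_iff_mul_le hA, mul_assoc, mul_comm ((1:FI) / _) A, ← mul_assoc]
      exact mul_one_div_le_one
    have h2 : (1 : FI) / (spanSingleton (nonZeroDivisors D) z * A)
        = spanSingleton (nonZeroDivisors D) z⁻¹ *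
          (spanSingleton (nonZeroDivisors D) z *
            ((1:FI) / (spanSingleton (nonZeroDivisors D) z * A))) := by
      rw [← mul_assoc, hinv, one_mul]
    rw [h2]
    exact mul_le_mul_left'' _ h1
  · rw [le_div_iff_mul_le hzA]
    have h3 : spanSingleton (nonZeroDivisors D) z⁻¹ * ((1:FI) / A) *
        (spanSingleton (nonZeroDivisors D) z * A)
        = (spanSingleton (nonZeroDivisors D) z⁻¹ * spanSingleton (nonZeroDivisors D) z) *
          (A * ((1:FI)/A)) := by ring
    rw [h3, hinv, one_mul]
    exact mul_one_div_le_one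

lemma vop_spanSingleton_mul {z : K} (hz : z ≠ 0) {A : FI} (hA : A ≠ 0) :
    vop (spanSingleton (nonZeroDivisors D) z * A)
      = spanSingleton (nonZeroDivisors D) z * vop A := by
  have h1 : (1 : FI) / A ≠ 0 := one_div_ne_zero hA
  rw [vop, one_div_spanSingleton_mul hz hA, one_div_spanSingleton_mul (inv_ne_zero hz) h1,
    inv_inv, vop]


lemma exists_mem_ne_zero {A : FI} (hA : A ≠ 0) : ∃ x ∈ A, x ≠ 0 := by
  by_contra h; push_neg at h; exact hA (eq_zero_iff.mpr h)

lemma div_ne_zero' {A B : FI} (hA : A ≠ 0) (hB : B ≠ 0) : A / B ≠ 0 := by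
  obtain ⟨x, hx, hx0⟩ := exists_mem_ne_zero hA
  obtain ⟨a, haS, ha⟩ := B.isFractional
  have ha0 : algebraMap D K a ≠ 0 :=
    IsFractionRing.to_map_ne_zero_of_mem_nonZeroDivisors haS
  have hmem : x * algebraMap D K a ∈ A / B := by
    rw [mem_div_iff_of_ne_zero hB]
    intro y hy
    obtain ⟨c, hc⟩ := ha y hy
    rw [Algebra.smul_def] at hc
    have : x * algebraMap D K a * y = c • x := by
      rw [Algebra.smul_def, hc]; ring
    rw [this]
    exact Submodule.smul_mem _ _ hx
  intro h0
  rw [h0] at hmem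
  exact (mul_ne_zero hx0 ha0) ((FractionalIdeal.mem_zero_iff _).mp hmem)

lemma inf_one_ne_zero {A : FI} (hA : A ≠ 0) : A ⊓ 1 ≠ (0 : FI) := by
  obtain ⟨x, hx, hx0⟩ := exists_mem_ne_zero hA
  obtain ⟨⟨r, s⟩, hrs⟩ := IsLocalization.mk'_surjective (S := K) (nonZeroDivisors D) x
  dsimp only at hrs
  have hs0 : algebraMap D K (s : D) ≠ 0 :=
    IsFractionRing.to_map_ne_zero_of_mem_nonZeroDivisors s.2
  have hxr : algebraMap D K r = (s : D) • x := by
    rw [Algebra.smul_def, ← hrs, ← IsLocalization.mk'_spec' K r s]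
  have hr0 : algebraMap D K r ≠ 0 := by
    rw [hxr, Algebra.smul_def]
    exact mul_ne_zero hs0 hx0
  intro h0
  have hmem : algebraMap D K r ∈ A ⊓ (1 : FI) := by
    rw [mem_inf_iff]
    exact ⟨hxr ▸ Submodule.smul_mem _ _ hx, FractionalIdeal.coe_mem_one _ r⟩
  rw [h0] at hmem
  exact hr0 ((FractionalIdeal.mem_zero_iff _).mp hmem)

lemma vop_div_le {A B : FI} (hA : A ≠ 0) (hB : B ≠ 0) : vop (A / B) ≤ vop A / B := by
  have hAB : A / B ≠ 0 := div_ne_zero' hA hB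
  have h1A : (1 : FI) / A ≠ 0 := one_div_ne_zero hA
  have h1AB : (1 : FI) / (A / B) ≠ 0 := one_div_ne_zero hAB
  intro t ht
  replace ht : t ∈ vop (A / B) := ht
  show t ∈ vop A / B
  rw [mem_div_iff_of_ne_zero hB]
  intro g hg
  rw [vop, mem_div_iff_of_ne_zero h1A]
  intro y hy
  have hgy : g * y ∈ (1 : FI) / (A / B) := by
    rw [mem_div_iff_of_ne_zero hAB]
    intro w hw
    have h1 : w * g ∈ A := (mem_div_iff_of_ne_zero hB).mp hw g hg
    have h2 : y * (w * g) ∈ (1 : FI) := (mem_div_iff_of_ne_zero hA).mp hy _ h1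
    have : g * y * w = y * (w * g) := by ring
    rwa [this]
  have := (mem_div_iff_of_ne_zero h1AB).mp ht _ hgy
  rwa [← mul_assoc] at this

lemma one_div_eq_one_of_vop_eq_one {Y : FI} (hY : Y ≠ 0) (h : vop Y = 1) :
    (1 : FI) / Y = 1 := by
  rw [← one_div_one_div_one_div hY]
  show (1 : FI) / vop Y = 1
  rw [h, FractionalIdeal.div_one]

lemma vop_eq_one_iff {X : FI} (hX : X ≤ 1) (hX0 : X ≠ 0) :
    vop X = 1 ↔ (1 : FI) / X = 1 := by
  constructor
  · exact one_div_eq_one_of_vop_eq_one hX0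
  · intro h; rw [vop, h, FractionalIdeal.div_one]

lemma vop_inf_one {X Y : FI} (hX : X ≤ 1) (hY : Y ≤ 1)
    (hvX : vop X = 1) (hvY : vop Y = 1) : vop (X ⊓ Y) = 1 := by
  have hX0 : X ≠ 0 := fun h => by rw [h, vop_zero] at hvX; exact one_ne_zero hvX.symm
  have hY0 : Y ≠ 0 := fun h => by rw [h, vop_zero] at hvY; exact one_ne_zero hvY.symm
  have hXY0 : X * Y ≠ 0 := by
    obtain ⟨x, hx, hx0⟩ := exists_mem_ne_zero hX0
    obtain ⟨y, hy, hy0⟩ := exists_mem_ne_zero hY0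
    intro h0
    have : x * y ∈ (0 : FI) := h0 ▸ mul_mem_mul hx hy
    exact (mul_ne_zero hx0 hy0) ((FractionalIdeal.mem_zero_iff _).mp this)
  have hmul_le : X * Y ≤ X ⊓ Y := by
    refine le_inf ?_ ?_
    · calc X * Y ≤ X * 1 := mul_le_mul_left'' _ hY
        _ = X := mul_one X
    · calc X * Y = Y * X := mul_comm X Y
        _ ≤ Y * 1 := mul_le_mul_left'' _ hX
        _ = Y := mul_one Y
  have hinf0 : X ⊓ Y ≠ 0 := fun h =>
    hXY0 (le_antisymm (h ▸ hmul_le) (zero_le _))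
  have h1X : (1 : FI) / X = 1 := one_div_eq_one_of_vop_eq_one hX0 hvX
  have h1Y : (1 : FI) / Y = 1 := one_div_eq_one_of_vop_eq_one hY0 hvY
  have hdivXY : (1 : FI) / (X * Y) ≤ 1 := by
    have step1 : ((1 : FI) / (X * Y)) * X ≤ (1 : FI) / Y := by
      rw [le_div_iff_mul_le hY0, mul_assoc]
      exact mul_one_div_le_one.trans_eq' (by rw [mul_comm])
    rw [h1Y] at step1
    have step2 : (1 : FI) / (X * Y) ≤ (1 : FI) / X := by
      rw [le_div_iff_mul_le hX0]; exact step1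
    rwa [h1X] at step2
  have hdivinf : (1 : FI) / (X ⊓ Y) = 1 := by
    apply le_antisymm
    · exact (one_div_anti hXY0 hmul_le).trans hdivXY
    · rw [le_div_iff_mul_le hinf0, one_mul]
      exact inf_le_left.trans hX
  rw [vop, hdivinf, FractionalIdeal.div_one]


lemma le_add_left' (A B : FI) : A ≤ A + B := by
  rw [← FractionalIdeal.coe_le_coe, FractionalIdeal.coe_add, Submodule.add_eq_sup]
  exact le_sup_left

lemma add_ne_zero' {A : FI} (hA : A ≠ 0) (B : FI) : A + B ≠ 0 :=
  fun h => hA (le_antisymm (h ▸ le_add_left' A B) (zero_le _))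

lemma div_add' (F : FI) {B C : FI} (hB : B ≠ 0) (hC : C ≠ 0) :
    F / (B + C) = (F / B) ⊓ (F / C) := by
  have hBC : B + C ≠ 0 := add_ne_zero' hB C
  apply le_antisymm
  · refine le_inf ?_ ?_
    · rw [le_div_iff_mul_le hB]
      exact mul_le.mpr fun i hi j hj =>
        (mem_div_iff_of_ne_zero hBC).mp hi j (le_add_left' B C hj)
    · rw [le_div_iff_mul_le hC]
      exact mul_le.mpr fun i hi j hj =>
        (mem_div_iff_of_ne_zero hBC).mp hi j
          ((le_add_left' C B).trans (le_of_eq (add_comm C B)) hj)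
  · intro x hx
    replace hx : x ∈ (F / B) ⊓ (F / C) := hx
    show x ∈ F / (B + C)
    rw [mem_inf_iff] at hx
    rw [mem_div_iff_of_ne_zero hBC]
    intro y hy
    have hy' : y ∈ (B : Submodule D K) ⊔ (C : Submodule D K) := by
      have : y ∈ ((B + C : FI) : Submodule D K) := hy
      rwa [FractionalIdeal.coe_add] at this
    obtain ⟨b, hb, c, hc, rfl⟩ := Submodule.mem_sup.mp hy'
    rw [mul_add]
    exact Submodule.add_mem _
      ((mem_div_iff_of_ne_zero hB).mp hx.1 b hb)
      ((mem_div_iff_of_ne_zero hC).mp hx.2 c hc)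

lemma add_split (F A B : FI) : F + (A + B) = (F + A) + (F + B) := by
  apply FractionalIdeal.coeToSubmodule_injective
  simp only [FractionalIdeal.coe_add]
  simp only [Submodule.add_eq_sup]
  rw [sup_sup_sup_comm, sup_idem]

lemma div_self_inf_one {F : FI} (hF : F ≠ 0) : (F / F) ⊓ 1 = (1 : FI) := by
  refine le_antisymm inf_le_right (le_inf ?_ le_rfl)
  rw [le_div_iff_mul_le hF, one_mul]

lemma one_fg : ((1 : FI) : Submodule D K).FG := by
  rw [FractionalIdeal.coe_one, Submodule.one_eq_span]
  exact Submodule.fg_span_singleton _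

section WithHdist

variable (hdist : ∀ F G : FractionalIdeal (nonZeroDivisors D) K, F ≠ 0 → G ≠ 0 →
      (F : Submodule D K).FG → (G : Submodule D K).FG → vop (F ⊓ G) = vop F ⊓ vop G)
include hdist

lemma vop_single_inf_one {F : FI} (hF : F ≠ 0) (hFfg : (F : Submodule D K).FG)
    {u : K} (hu0 : u ≠ 0) (hu : u ∈ vop F) :
    vop ((F / spanSingleton (nonZeroDivisors D) u) ⊓ 1) = 1 := by
  rw [FractionalIdeal.div_spanSingleton]
  set X := spanSingleton (nonZeroDivisors D) u⁻¹ * F with hXdef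
  have hX0 : X ≠ 0 := by
    obtain ⟨x, hx, hx0⟩ := exists_mem_ne_zero hF
    intro h0
    have : u⁻¹ * x ∈ (0 : FI) := h0 ▸ mul_mem_mul (mem_spanSingleton_self _ _) hx
    exact (mul_ne_zero (inv_ne_zero hu0) hx0) ((FractionalIdeal.mem_zero_iff _).mp this)
  have hXfg : (X : Submodule D K).FG := by
    rw [hXdef, FractionalIdeal.coe_mul, FractionalIdeal.coe_spanSingleton]
    exact Submodule.FG.mul (Submodule.fg_span_singleton _) hFfg
  have h := hdist X 1 hX0 one_ne_zero hXfg one_fg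
  rw [vop_one] at h
  apply le_antisymm
  · exact (vop_mono inf_le_right).trans_eq vop_one
  · rw [h]
    refine le_inf ?_ le_rfl
    have h1 : (1 : FI) = spanSingleton (nonZeroDivisors D) u⁻¹ *
        spanSingleton (nonZeroDivisors D) u := by
      rw [spanSingleton_mul_spanSingleton, inv_mul_cancel₀ hu0, spanSingleton_one]
    rw [hXdef, vop_spanSingleton_mul (inv_ne_zero hu0) hF, h1]
    exact mul_le_mul_left'' _ (spanSingleton_le_iff_mem.mpr hu)

noncomputable def sumSpans : List K → FractionalIdeal (nonZeroDivisors D) K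
  | [] => 0
  | u :: t => spanSingleton (nonZeroDivisors D) u + sumSpans t

omit hdist in
lemma coe_sumSpans (l : List K) :
    ((sumSpans (D := D) (K := K) l : FI) : Submodule D K)
      = Submodule.span D {x : K | x ∈ l} := by
  induction l with
  | nil => simp [sumSpans]
  | cons u t ih =>
      rw [sumSpans, FractionalIdeal.coe_add, ih, FractionalIdeal.coe_spanSingleton,
        Submodule.add_eq_sup, ← Submodule.span_union]
      congr 1
      ext x
      simp

lemma vop_key {F : FI} (hF : F ≠ 0) (hFfg : (F : Submodule D K).FG) :
    ∀ l : List K, (∀ u ∈ l, u ∈ vop F) →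
      vop ((F / (F + sumSpans l)) ⊓ 1) = 1 := by
  intro l
  induction l with
  | nil =>
      intro _
      show vop ((F / (F + 0)) ⊓ 1) = 1
      rw [add_zero, div_self_inf_one hF, vop_one]
  | cons u t ih =>
      intro hl
      have hu : u ∈ vop F := hl u (List.mem_cons_self (a := u) (l := t))
      have ht : ∀ v ∈ t, v ∈ vop F := fun v hv => hl v (List.mem_cons_of_mem u hv)
      show vop ((F / (F + (spanSingleton (nonZeroDivisors D) u + sumSpans t))) ⊓ 1) = 1
      rw [add_split, div_add' F (add_ne_zero' hF _) (add_ne_zero' hF _)]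
      have hsplit : (F / (F + spanSingleton (nonZeroDivisors D) u) ⊓
          (F / (F + sumSpans t))) ⊓ 1
          = ((F / (F + spanSingleton (nonZeroDivisors D) u)) ⊓ 1) ⊓
            ((F / (F + sumSpans t)) ⊓ 1) := by
        rw [inf_inf_distrib_right]
      rw [hsplit]
      refine vop_inf_one inf_le_right inf_le_right ?_ (ih ht)
      -- single generator case
      by_cases hu0 : u = 0
      · rw [hu0, spanSingleton_zero, add_zero, div_self_inf_one hF, vop_one]
      · have hspan0 : spanSingleton (nonZeroDivisors D) u ≠ 0 :=
          spanSingleton_ne_zero_iff.mpr hu0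
        rw [div_add' F hF hspan0]
        have : (F / F ⊓ F / spanSingleton (nonZeroDivisors D) u) ⊓ 1
            = ((F / F) ⊓ 1) ⊓ ((F / spanSingleton (nonZeroDivisors D) u) ⊓ 1) := by
          rw [inf_inf_distrib_right]
        rw [this, div_self_inf_one hF]
        refine vop_inf_one le_rfl inf_le_right vop_one ?_
        exact vop_single_inf_one hdist hF hFfg hu0 hu

end WithHdist

end VAux

/-- If the `v`-operation distributes over finite intersections of nonzero f.g. fractional
ideals, then `((F :_D G))^v = (F^v :_D G^v)` for all nonzero f.g. `F, G`. -/
theorem v_colon_of_v_distributes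
    (hdist : ∀ F G : FractionalIdeal (nonZeroDivisors D) K, F ≠ 0 → G ≠ 0 →
      (F : Submodule D K).FG → (G : Submodule D K).FG → vop (F ⊓ G) = vop F ⊓ vop G) :
    ∀ F G : FractionalIdeal (nonZeroDivisors D) K, F ≠ 0 → G ≠ 0 →
      (F : Submodule D K).FG → (G : Submodule D K).FG →
      vop ((F / G) ⊓ 1) = (vop F / vop G) ⊓ 1 := by
  intro F G hF hG hFfg hGfg
  have hvF : vop F ≠ 0 := VAux.vop_ne_zero hF
  have hvG : vop G ≠ 0 := VAux.vop_ne_zero hG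
  have hdivle : F / G ≤ vop F / vop G := by
    intro x hx
    replace hx : x ∈ F / G := hx
    show x ∈ vop F / vop G
    rw [mem_div_iff_of_ne_zero hvG]
    intro y hy
    by_cases hx0 : x = 0
    · rw [hx0, zero_mul]; exact zero_mem _
    · have hspan : spanSingleton (nonZeroDivisors D) x * G ≤ F :=
        (le_div_iff_mul_le hG).mp (spanSingleton_le_iff_mem.mpr hx)
      have h1 : vop (spanSingleton (nonZeroDivisors D) x * G) ≤ vop F := VAux.vop_mono hspan
      rw [VAux.vop_spanSingleton_mul hx0 hG] at h1
      exact h1 (mul_mem_mul (mem_spanSingleton_self _ x) hy)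
  have hALE : (F / G) ⊓ 1 ≤ (vop F / vop G) ⊓ 1 := inf_le_inf_right 1 hdivle
  have hFG0 : F / G ≠ 0 := VAux.div_ne_zero' hF hG
  have hL0 : (F / G) ⊓ 1 ≠ 0 := VAux.inf_one_ne_zero hFG0
  have hR0 : (vop F / vop G) ⊓ 1 ≠ 0 := fun h => hL0 (le_antisymm (h ▸ hALE) (zero_le _))
  have hRdiv : vop ((vop F / vop G) ⊓ 1) = (vop F / vop G) ⊓ 1 := by
    apply le_antisymm
    · refine le_inf ?_ ?_
      · calc vop ((vop F / vop G) ⊓ 1) ≤ vop (vop F / vop G) := VAux.vop_mono inf_le_left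
          _ ≤ vop (vop F) / vop G := VAux.vop_div_le hvF hvG
          _ = vop F / vop G := by rw [VAux.vop_vop hF]
      · exact (VAux.vop_mono inf_le_right).trans_eq VAux.vop_one
    · exact VAux.le_vop hR0
  have hBLE : (vop F / vop G) ⊓ 1 ≤ vop ((F / G) ⊓ 1) := by
    intro z hz
    replace hz : z ∈ (vop F / vop G) ⊓ 1 := hz
    show z ∈ vop ((F / G) ⊓ 1)
    rw [VAux.mem_inf_iff] at hz
    obtain ⟨hz1, hz2⟩ := hz
    by_cases hz0 : z = 0
    · rw [hz0]; exact zero_mem _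
    obtain ⟨s, hs⟩ := hGfg
    set l : List K := s.toList.map (fun g => z * g) with hl
    have hlv : ∀ u ∈ l, u ∈ vop F := by
      intro u hu
      rw [hl, List.mem_map] at hu
      obtain ⟨g, hg, rfl⟩ := hu
      have hgG : g ∈ G := by
        rw [← FractionalIdeal.mem_coe, ← hs]
        exact Submodule.subset_span (by simpa using hg)
      exact (mem_div_iff_of_ne_zero hvG).mp hz1 g (VAux.le_vop hG hgG)
    have hkey := VAux.vop_key hdist hF hFfg l hlv
    set H := F + VAux.sumSpans (D := D) (K := K) l with hH
    have hH0 : H ≠ 0 := VAux.add_ne_zero' hF _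
    have hmul : spanSingleton (nonZeroDivisors D) z * ((F / H) ⊓ 1) ≤ (F / G) ⊓ 1 := by
      refine mul_le.mpr fun i hi j hj => ?_
      obtain ⟨d, rfl⟩ := (mem_spanSingleton _).mp hi
      have hzj : z * j ∈ (F / G) ⊓ 1 := by
        rw [VAux.mem_inf_iff] at hj ⊢
        constructor
        · rw [mem_div_iff_of_ne_zero hG]
          intro y hy
          have hzy : z * y ∈ VAux.sumSpans (D := D) (K := K) l := by
            rw [← FractionalIdeal.mem_coe, VAux.coe_sumSpans]
            have hy' : y ∈ Submodule.span D (↑s : Set K) := by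
              rw [hs]; exact hy
            have : z * y ∈ Submodule.map (LinearMap.mulLeft D z)
                (Submodule.span D (↑s : Set K)) :=
              Submodule.mem_map_of_mem hy'
            rw [Submodule.map_span] at this
            convert this using 2
            case e'_6 =>
              ext w
              simp [hl, List.mem_map, eq_comm]
            rfl
          have hzyH : z * y ∈ H := by
            have : VAux.sumSpans (D := D) (K := K) l ≤ H := by
              rw [hH, add_comm]; exact VAux.le_add_left' _ _
            exact this hzy
          have := (mem_div_iff_of_ne_zero hH0).mp hj.1 _ hzyH
          have heq : z * j * y = j * (z * y) := by ring
          rwa [heq]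
        · have := mul_mem_mul hz2 hj.2
          rwa [one_mul] at this
      have heq : d • z * j = d • (z * j) := by rw [smul_mul_assoc]
      rw [heq]
      exact Submodule.smul_mem _ _ hzj
    have hX0 : (F / H) ⊓ 1 ≠ 0 := fun h => by
      rw [h, VAux.vop_zero] at hkey; exact one_ne_zero hkey.symm
    have hfin : spanSingleton (nonZeroDivisors D) z ≤ vop ((F / G) ⊓ 1) := by
      calc spanSingleton (nonZeroDivisors D) z
          = spanSingleton (nonZeroDivisors D) z * vop ((F / H) ⊓ 1) := by rw [hkey, mul_one]
        _ = vop (spanSingleton (nonZeroDivisors D) z * ((F / H) ⊓ 1)) :=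
            (VAux.vop_spanSingleton_mul hz0 hX0).symm
        _ ≤ vop ((F / G) ⊓ 1) := VAux.vop_mono hmul
    exact hfin (mem_spanSingleton_self _ z)
  exact le_antisymm ((VAux.vop_mono hALE).trans (le_of_eq hRdiv)) hBLE
end

section
/- Let D be a v-domain. If A and B are v-invertible nonzero fractional ideals of D, then A + B is v-invertible. Conversely, if D is an integral domain in which the sum of any two v-invertible fractional ideals is v-invertible, then D is a v-domain (since principal fractional ideals are v-invertible and every finitely generated fractional ideal is a finite sum of principal ones). -/
open FractionalIdeal

variable {D K : Type*} [CommRing D] [IsDomain D] [Field K] [Algebra D K] [IsFractionRing D K]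

namespace VAux

theorem one_div_ne_zero' {I : FractionalIdeal (nonZeroDivisors D) K} (hI : I ≠ 0) :
    1 / I ≠ 0 := by
  obtain ⟨d, hd, hdI⟩ := I.isFractional
  have hmem : algebraMap D K d ∈ 1 / I := by
    rw [mem_div_iff_of_ne_zero hI]
    intro y hy
    obtain ⟨c, hc⟩ := hdI y ((mem_coe).mpr hy)
    rw [Algebra.smul_def] at hc
    exact (mem_one_iff _).mpr ⟨c, hc⟩
  intro h
  rw [h, mem_zero_iff] at hmem
  exact IsFractionRing.to_map_ne_zero_of_mem_nonZeroDivisors hd hmem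

theorem mul_ne_zero' {I J : FractionalIdeal (nonZeroDivisors D) K} (hI : I ≠ 0) (hJ : J ≠ 0) :
    I * J ≠ 0 := by
  obtain ⟨x, hx0, hxI⟩ := exists_ne_zero_mem_isInteger hI
  obtain ⟨y, hy0, hyJ⟩ := exists_ne_zero_mem_isInteger hJ
  intro h
  have hmem : algebraMap D K x * algebraMap D K y ∈ I * J := mul_mem_mul hxI hyJ
  rw [h, mem_zero_iff] at hmem
  have hx' : algebraMap D K x ≠ 0 :=
    IsFractionRing.to_map_ne_zero_of_mem_nonZeroDivisors (mem_nonZeroDivisors_of_ne_zero hx0)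
  have hy' : algebraMap D K y ≠ 0 :=
    IsFractionRing.to_map_ne_zero_of_mem_nonZeroDivisors (mem_nonZeroDivisors_of_ne_zero hy0)
  exact mul_ne_zero hx' hy' hmem

theorem mul_le_mul'' {I J I' J' : FractionalIdeal (nonZeroDivisors D) K}
    (h : I ≤ J) (h' : I' ≤ J') : I * I' ≤ J * J' :=
  le_trans (mul_right_mono (a := I) h') (mul_left_mono (a := J') h)

theorem one_div_antitone {I J : FractionalIdeal (nonZeroDivisors D) K}
    (hI : I ≠ 0) (h : I ≤ J) : 1 / J ≤ 1 / I := by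
  rw [le_div_iff_mul_le hI]
  calc 1 / J * I ≤ 1 / J * J := mul_right_mono (a := _) h
    _ ≤ 1 := by rw [mul_comm]; exact mul_one_div_le_one

theorem le_one_div_one_div (I : FractionalIdeal (nonZeroDivisors D) K) :
    I ≤ 1 / (1 / I) := by
  by_cases hI : I = 0
  · simp [hI]
  · rw [le_div_iff_mul_le (one_div_ne_zero' hI)]
    exact mul_one_div_le_one

theorem one_div_one_div_one_div_s18 (I : FractionalIdeal (nonZeroDivisors D) K) :
    1 / (1 / (1 / I)) = 1 / I := by
  by_cases hI : I = 0
  · simp [hI]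
  · exact le_antisymm (one_div_antitone hI (le_one_div_one_div I))
      (le_one_div_one_div (1 / I))

theorem isVInvertible_iff {A : FractionalIdeal (nonZeroDivisors D) K} :
    IsVInvertible A ↔ 1 / (A * (1 / A)) = 1 := by
  unfold IsVInvertible vop
  constructor
  · intro h
    have h2 := congrArg (fun X : FractionalIdeal (nonZeroDivisors D) K => 1 / X) h
    rwa [one_div_one_div_one_div_s18, FractionalIdeal.div_one] at h2
  · intro h
    rw [h, FractionalIdeal.div_one]

theorem principal_isVInvertible {x : K} (hx : x ≠ 0) :
    IsVInvertible (spanSingleton (nonZeroDivisors D) x) := by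
  have h1 : spanSingleton (nonZeroDivisors D) x * (1 / spanSingleton (nonZeroDivisors D) x) = 1 :=
    mul_div_self_cancel_iff.mpr ⟨spanSingleton (nonZeroDivisors D) x⁻¹, by
      rw [spanSingleton_mul_spanSingleton, mul_inv_cancel₀ hx, spanSingleton_one]⟩
  rw [isVInvertible_iff, h1, FractionalIdeal.div_one]

theorem inf_ne_zero' {A B : FractionalIdeal (nonZeroDivisors D) K}
    (hA : A ≠ 0) (hB : B ≠ 0) : A ⊓ B ≠ 0 := by
  obtain ⟨a, ha0, haA⟩ := exists_ne_zero_mem_isInteger hA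
  obtain ⟨b, hb0, hbB⟩ := exists_ne_zero_mem_isInteger hB
  intro h
  have habA : algebraMap D K a * algebraMap D K b ∈ A := by
    rw [← mem_coe, mul_comm, ← Algebra.smul_def]
    exact Submodule.smul_mem _ b ((mem_coe).mpr haA)
  have habB : algebraMap D K a * algebraMap D K b ∈ B := by
    rw [← mem_coe, ← Algebra.smul_def]
    exact Submodule.smul_mem _ a ((mem_coe).mpr hbB)
  have hmem : algebraMap D K a * algebraMap D K b ∈ A ⊓ B := by
    have := le_inf (spanSingleton_le_iff_mem.mpr habA) (spanSingleton_le_iff_mem.mpr habB)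
    exact this (mem_spanSingleton_self _ _)
  rw [h, mem_zero_iff] at hmem
  exact mul_ne_zero
    (IsFractionRing.to_map_ne_zero_of_mem_nonZeroDivisors (mem_nonZeroDivisors_of_ne_zero ha0))
    (IsFractionRing.to_map_ne_zero_of_mem_nonZeroDivisors (mem_nonZeroDivisors_of_ne_zero hb0))
    hmem

end VAux

open VAux in
/-- In a `v`-domain, the sum of two `v`-invertible nonzero fractional ideals is
`v`-invertible; conversely, if sums of `v`-invertible fractional ideals are
`v`-invertible, then `D` is a `v`-domain. -/
theorem vDomain_sum_vInvertible :
    ((∀ F : FractionalIdeal (nonZeroDivisors D) K, F ≠ 0 → (F : Submodule D K).FG →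
        IsVInvertible F) →
      ∀ A B : FractionalIdeal (nonZeroDivisors D) K, A ≠ 0 → B ≠ 0 →
        IsVInvertible A → IsVInvertible B → IsVInvertible (A + B)) ∧
    ((∀ A B : FractionalIdeal (nonZeroDivisors D) K,
        IsVInvertible A → IsVInvertible B → IsVInvertible (A + B)) →
      ∀ F : FractionalIdeal (nonZeroDivisors D) K, F ≠ 0 → (F : Submodule D K).FG →
        IsVInvertible F) := by
  constructor
  · -- forward direction: v-domain implies sums of v-invertibles are v-invertible
    intro hv A B hA0 hB0 hAv hBv
    rw [isVInvertible_iff] at hAv hBv ⊢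
    set C : FractionalIdeal (nonZeroDivisors D) K := A + B with hCdef
    have hAC : A ≤ C := le_sup_left.trans_eq (sup_eq_add A B)
    have hBC : B ≤ C := le_sup_right.trans_eq (sup_eq_add A B)
    have hC0 : C ≠ 0 := fun h => hA0 (le_antisymm (h ▸ hAC) (zero_le A))
    have hCinv0 : (1 : FractionalIdeal (nonZeroDivisors D) K) / C ≠ 0 := one_div_ne_zero' hC0
    have hCC0 : C * (1 / C) ≠ 0 := mul_ne_zero' hC0 hCinv0
    have hge : (1 : FractionalIdeal (nonZeroDivisors D) K) ≤ 1 / (C * (1 / C)) := by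
      rw [le_div_iff_mul_le hCC0, one_mul]
      exact mul_one_div_le_one
    have hAA0 : A * (1 / A) ≠ 0 := mul_ne_zero' hA0 (one_div_ne_zero' hA0)
    have hBB0 : B * (1 / B) ≠ 0 := mul_ne_zero' hB0 (one_div_ne_zero' hB0)
    set E : FractionalIdeal (nonZeroDivisors D) K := (A ⊓ B) * (1 / A) * (1 / B) with hEdef
    have hE0 : E ≠ 0 :=
      mul_ne_zero' (mul_ne_zero' (inf_ne_zero' hA0 hB0) (one_div_ne_zero' hA0))
        (one_div_ne_zero' hB0)
    have hCE0 : C * E ≠ 0 := mul_ne_zero' hC0 hE0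
    have hinfC : (A ⊓ B) * C ≤ A * B := by
      rw [show (A ⊓ B) * C = (A ⊓ B) * A + (A ⊓ B) * B from by rw [hCdef]; ring, ← sup_eq_add]
      refine sup_le ?_ ?_
      · exact (mul_le_mul'' inf_le_right le_rfl).trans_eq (mul_comm B A)
      · exact mul_le_mul'' inf_le_left le_rfl
    have hEC : E ≤ 1 / C := by
      rw [le_div_iff_mul_le hC0]
      calc E * C = ((A ⊓ B) * C) * ((1 / A) * (1 / B)) := by rw [hEdef]; ring
        _ ≤ (A * B) * ((1 / A) * (1 / B)) := mul_le_mul'' hinfC le_rfl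
        _ = (A * (1 / A)) * (B * (1 / B)) := by ring
        _ ≤ 1 * 1 := mul_le_mul'' mul_one_div_le_one mul_one_div_le_one
        _ = 1 := one_mul 1
    have h1 : 1 / (C * (1 / C)) ≤ 1 / (C * E) :=
      one_div_antitone hCE0 (mul_le_mul'' le_rfl hEC)
    have hfinal : 1 / (C * E) ≤ 1 := by
      rw [← coe_le_coe]
      intro x hx
      rw [mem_coe] at hx ⊢
      set X : FractionalIdeal (nonZeroDivisors D) K := spanSingleton (nonZeroDivisors D) x
        with hXdef
      have hX : X * (C * E) ≤ 1 := (le_div_iff_mul_le hCE0).mp (spanSingleton_le_iff_mem.mpr hx)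
      have claim1 : (A * B) * (X * (1 / A) * (1 / B)) ≤ 1 := by
        rw [mul_le]
        intro w hw t ht
        have hw' : w ∈ (A : Submodule D K) * (B : Submodule D K) := by
          rw [← coe_mul]; exact (mem_coe).mpr hw
        refine Submodule.mul_induction_on hw' ?_ ?_
        · intro a ha b hb
          rw [mem_coe] at ha hb
          by_cases ha0 : a = 0
          · rw [ha0, zero_mul, zero_mul]; exact zero_mem _
          by_cases hb0 : b = 0
          · rw [hb0, mul_zero, zero_mul]; exact zero_mem _
          set J : FractionalIdeal (nonZeroDivisors D) K :=
            spanSingleton (nonZeroDivisors D) a + spanSingleton (nonZeroDivisors D) b with hJdef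
          have haJ : spanSingleton (nonZeroDivisors D) a ≤ J :=
            le_sup_left.trans_eq (sup_eq_add _ _)
          have hbJ : spanSingleton (nonZeroDivisors D) b ≤ J :=
            le_sup_right.trans_eq (sup_eq_add _ _)
          have hJ0 : J ≠ 0 := fun h =>
            ha0 (spanSingleton_eq_zero_iff.mp (le_antisymm (h ▸ haJ) (zero_le _)))
          have hJfg : (J : Submodule D K).FG := by
            rw [hJdef, coe_add, coe_spanSingleton, coe_spanSingleton]
            exact (Submodule.fg_span_singleton a).sup (Submodule.fg_span_singleton b)
          have hJinv : 1 / (J * (1 / J)) = 1 := isVInvertible_iff.mp (hv J hJ0 hJfg)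
          have hJJ0 : J * (1 / J) ≠ 0 := mul_ne_zero' hJ0 (one_div_ne_zero' hJ0)
          have hJC : J ≤ C := by
            rw [hJdef, ← sup_eq_add]
            exact sup_le ((spanSingleton_le_iff_mem.mpr ha).trans hAC)
              ((spanSingleton_le_iff_mem.mpr hb).trans hBC)
          have key0 : spanSingleton (nonZeroDivisors D) (a * b) * (1 / J) ≤ A ⊓ B := by
            refine le_inf ?_ ?_
            · rw [← spanSingleton_mul_spanSingleton]
              calc spanSingleton (nonZeroDivisors D) a * spanSingleton (nonZeroDivisors D) b
                    * (1 / J)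
                  = spanSingleton (nonZeroDivisors D) a
                    * (spanSingleton (nonZeroDivisors D) b * (1 / J)) := mul_assoc _ _ _
                _ ≤ spanSingleton (nonZeroDivisors D) a * (J * (1 / J)) :=
                    mul_right_mono (a := _) (mul_le_mul'' hbJ le_rfl)
                _ ≤ spanSingleton (nonZeroDivisors D) a * 1 :=
                    mul_right_mono (a := _) mul_one_div_le_one
                _ = spanSingleton (nonZeroDivisors D) a := mul_one _
                _ ≤ A := spanSingleton_le_iff_mem.mpr ha
            · rw [show a * b = b * a from mul_comm a b, ← spanSingleton_mul_spanSingleton]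
              calc spanSingleton (nonZeroDivisors D) b * spanSingleton (nonZeroDivisors D) a
                    * (1 / J)
                  = spanSingleton (nonZeroDivisors D) b
                    * (spanSingleton (nonZeroDivisors D) a * (1 / J)) := mul_assoc _ _ _
                _ ≤ spanSingleton (nonZeroDivisors D) b * (J * (1 / J)) :=
                    mul_right_mono (a := _) (mul_le_mul'' haJ le_rfl)
                _ ≤ spanSingleton (nonZeroDivisors D) b * 1 :=
                    mul_right_mono (a := _) mul_one_div_le_one
                _ = spanSingleton (nonZeroDivisors D) b := mul_one _
                _ ≤ B := spanSingleton_le_iff_mem.mpr hb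
          have key1 : spanSingleton (nonZeroDivisors D) (a * b) * (X * (1 / A) * (1 / B))
              ≤ 1 / (J * (1 / J)) := by
            rw [le_div_iff_mul_le hJJ0]
            calc spanSingleton (nonZeroDivisors D) (a * b) * (X * (1 / A) * (1 / B))
                  * (J * (1 / J))
                = X * ((J * (spanSingleton (nonZeroDivisors D) (a * b) * (1 / J)))
                  * (1 / A) * (1 / B)) := by ring
              _ ≤ X * ((C * (A ⊓ B)) * (1 / A) * (1 / B)) :=
                  mul_right_mono (a := _)
                    (mul_le_mul'' (mul_le_mul'' (mul_le_mul'' hJC key0) le_rfl) le_rfl)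
              _ = X * (C * E) := by rw [hEdef]; ring
              _ ≤ 1 := hX
          have key2 : spanSingleton (nonZeroDivisors D) (a * b) * (X * (1 / A) * (1 / B))
              ≤ 1 := key1.trans_eq hJinv
          exact key2 (mul_mem_mul (mem_spanSingleton_self _ _) ht)
        · intro y z hy hz
          rw [add_mul]
          rw [← mem_coe] at hy hz ⊢
          exact Submodule.add_mem _ hy hz
      have step1 : (X * B * (1 / B)) * (A * (1 / A)) ≤ 1 := by
        calc (X * B * (1 / B)) * (A * (1 / A))
            = (A * B) * (X * (1 / A) * (1 / B)) := by ring
          _ ≤ 1 := claim1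
      have step2 : X * B * (1 / B) ≤ 1 := by
        have := (le_div_iff_mul_le hAA0).mpr step1
        rwa [hAv] at this
      have step3 : X * (B * (1 / B)) ≤ 1 := (mul_assoc X B (1 / B)) ▸ step2
      have step4 : X ≤ 1 := by
        have := (le_div_iff_mul_le hBB0).mpr step3
        rwa [hBv] at this
      exact spanSingleton_le_iff_mem.mp step4
    exact le_antisymm (h1.trans hfinal) hge
  · -- converse direction
    intro hsum F hF0 hFfg
    have sumspan : ∀ s : Finset K,
        (∑ x ∈ s, spanSingleton (nonZeroDivisors D) x) ≠ 0 →
        IsVInvertible (∑ x ∈ s, spanSingleton (nonZeroDivisors D) x) := by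
      intro s
      induction s using Finset.cons_induction with
      | empty => intro h; exact absurd Finset.sum_empty h
      | cons x s hxs ih =>
        intro h
        rw [Finset.sum_cons] at h ⊢
        by_cases hx0 : x = 0
        · rw [hx0, spanSingleton_zero, zero_add] at h ⊢
          exact ih h
        by_cases hS : (∑ y ∈ s, spanSingleton (nonZeroDivisors D) y) = 0
        · rw [hS, add_zero]
          exact principal_isVInvertible hx0
        · exact hsum _ _ (principal_isVInvertible hx0) (ih hS)
    obtain ⟨s, hs⟩ := hFfg
    have hcoe : ∀ t : Finset K,
        ((∑ x ∈ t, spanSingleton (nonZeroDivisors D) x :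
          FractionalIdeal (nonZeroDivisors D) K) : Submodule D K)
          = Submodule.span D (t : Set K) := by
      intro t
      induction t using Finset.cons_induction with
      | empty => simp
      | cons x t hxt ih =>
        rw [Finset.sum_cons, coe_add, coe_spanSingleton, ih, Finset.coe_cons,
          Submodule.span_insert, Submodule.add_eq_sup]
    have hFeq : F = ∑ x ∈ s, spanSingleton (nonZeroDivisors D) x := by
      apply coeToSubmodule_injective
      show (F : Submodule D K) = ((∑ x ∈ s, spanSingleton (nonZeroDivisors D) x :
        FractionalIdeal (nonZeroDivisors D) K) : Submodule D K)
      rw [hcoe s, hs]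
    rw [hFeq] at hF0 ⊢
    exact sumspan s hF0
end
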